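/- arXiv:1506.01194 — 2 statements merged into one kernel-verified Lean document; each statement's English description precedes it below -/
import Mathlib

section
/- For the Erlang distribution with rate λ > 0 and integer shape α ≥ 1, whose survival function is 1 - F(x) = e^(-λx) Σ_{i=0}^{α-1} (λx)^i/i!, and any a < ξ < b, the quantity π(ξ-a)(1 - F(b-ξ))/(1 - F(b-a)) is bounded above by (λ^α (b-a)^(α-1) / ((α-1)! Σ_{i=0}^{α-1} λ^i (b-a)^i/i!)) · Σ_{i=0}^{α-1} (λ(b-a)/4)^i / i!. -/
theorem stmt_2 (l : ℝ) (hl : 0 < l) (α : ℕ) (hα : 1 ≤ α)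
    (π : ℝ → ℝ)
    (hπ : ∀ x : ℝ, π x = l ^ α * x ^ (α - 1) * Real.exp (-l * x) / (α - 1).factorial)
    (S : ℝ → ℝ)
    (hS : ∀ x : ℝ, S x = Real.exp (-l * x) * ∑ i ∈ Finset.range α, (l * x) ^ i / i.factorial)
    (a b ξ : ℝ) (h₁ : a < ξ) (h₂ : ξ < b) :
    π (ξ - a) * S (b - ξ) / S (b - a) ≤
      (l ^ α * (b - a) ^ (α - 1) /
          ((α - 1).factorial * ∑ i ∈ Finset.range α, l ^ i * (b - a) ^ i / i.factorial)) *
        ∑ i ∈ Finset.range α, (l * (b - a) / 4) ^ i / i.factorial := by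
  obtain ⟨m, rfl⟩ : ∃ m, α = m + 1 := ⟨α - 1, (Nat.succ_pred_eq_of_pos hα).symm⟩
  set s := ξ - a with hsdef
  set t := b - ξ with htdef
  set d := b - a with hddef
  have hs0 : 0 < s := by simp [hsdef]; linarith
  have ht0 : 0 < t := by simp [htdef]; linarith
  have hd0 : 0 < d := by simp [hddef]; linarith
  have hst : s + t = d := by rw [hsdef, htdef, hddef]; ring
  rw [hπ, hS, hS]
  simp only [Nat.add_sub_cancel]
  set Tt := ∑ i ∈ Finset.range (m + 1), (l * t) ^ i / i.factorial with hTt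
  set Td := ∑ i ∈ Finset.range (m + 1), (l * d) ^ i / i.factorial with hTd
  have hTd' : (∑ i ∈ Finset.range (m + 1), l ^ i * d ^ i / i.factorial) = Td := by
    rw [hTd]; exact Finset.sum_congr rfl fun i _ => by rw [mul_pow]
  rw [hTd']
  have hTdpos : 0 < Td := by
    rw [hTd]
    apply Finset.sum_pos (fun i _ => by positivity) ⟨0, Finset.mem_range.2 (Nat.succ_pos m)⟩
  have hM : (0:ℝ) < (m.factorial : ℝ) := Nat.cast_pos.2 m.factorial_pos
  have hE : Real.exp (-l * s) * Real.exp (-l * t) = Real.exp (-l * d) := by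
    rw [← Real.exp_add]; congr 1; rw [← hst]; ring
  have hEd : (0:ℝ) < Real.exp (-l * d) := Real.exp_pos _
  have key : s ^ m * Tt ≤ d ^ m * ∑ i ∈ Finset.range (m + 1), (l * d / 4) ^ i / i.factorial := by
    rw [hTt, Finset.mul_sum, Finset.mul_sum]
    apply Finset.sum_le_sum
    intro i hi
    have him : i ≤ m := Nat.lt_succ_iff.mp (Finset.mem_range.mp hi)
    have hpow : s ^ m * t ^ i ≤ d ^ m * (d / 4) ^ i := by
      have h1 : s ^ m * t ^ i = s ^ (m - i) * (s * t) ^ i := by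
        rw [mul_pow, ← mul_assoc, ← pow_add, Nat.sub_add_cancel him]
      have h2 : s ^ (m - i) ≤ d ^ (m - i) :=
        pow_le_pow_left₀ hs0.le (by linarith) _
      have h3 : (s * t) ^ i ≤ (d ^ 2 / 4) ^ i :=
        pow_le_pow_left₀ (by positivity) (by nlinarith [sq_nonneg (s - t)]) _
      have h4 : d ^ (m - i) * (d ^ 2 / 4) ^ i = d ^ m * (d / 4) ^ i := by
        rw [div_pow, div_pow, ← pow_mul, ← mul_div_assoc, ← mul_div_assoc, ← pow_add, ← pow_add]
        congr 2
        omega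
      calc s ^ m * t ^ i = s ^ (m - i) * (s * t) ^ i := h1
        _ ≤ d ^ (m - i) * (d ^ 2 / 4) ^ i := by
            apply mul_le_mul h2 h3 (by positivity) (by positivity)
        _ = d ^ m * (d / 4) ^ i := h4
    calc s ^ m * ((l * t) ^ i / i.factorial)
        = l ^ i * (s ^ m * t ^ i) / i.factorial := by rw [mul_pow]; ring
      _ ≤ l ^ i * (d ^ m * (d / 4) ^ i) / i.factorial := by
          apply div_le_div_of_nonneg_right ?_ (by positivity) |>.trans_eq rfl
          exact mul_le_mul_of_nonneg_left hpow (by positivity)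
      _ = d ^ m * ((l * d / 4) ^ i / i.factorial) := by
          rw [show l * d / 4 = l * (d / 4) by ring, mul_pow]; ring
  have hLHS : l ^ (m + 1) * s ^ m * Real.exp (-l * s) / ↑m.factorial *
      (Real.exp (-l * t) * Tt) / (Real.exp (-l * d) * Td)
      = l ^ (m + 1) * (s ^ m * Tt) / (↑m.factorial * Td) := by
    simp only [neg_mul] at hE ⊢
    field_simp
    linear_combination Tt * hE
  rw [hLHS]
  rw [div_mul_eq_mul_div, div_le_div_iff₀ (by positivity) (by positivity)]
  have := mul_le_mul_of_nonneg_left key (by positivity : (0:ℝ) ≤ l ^ (m + 1))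
  nlinarith [mul_pos hM hTdpos]
end

section
/- Let π be the Erlang density with rate λ > 0 and integer shape α ≥ 2, and 1-F its survival function. If λ < (α-1)/(b-a), then the function φ(ξ) = π(ξ - a)·(1 - F(b - ξ)) is monotonically increasing on the open interval (a, b). -/
lemma aux_mono (l : ℝ) (hl : 0 < l) (n : ℕ) (hn : 1 ≤ n) (a b : ℝ) (hab : a < b)
    (hrate : l * (b - a) < n) :
    MonotoneOn (fun ξ : ℝ => (ξ - a) ^ n *
      ∑ i ∈ Finset.range (n + 1), (l * (b - ξ)) ^ i / i.factorial) (Set.Ioo a b) := by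
  set g : ℝ → ℝ := fun ξ => (ξ - a) ^ n *
      ∑ i ∈ Finset.range (n + 1), (l * (b - ξ)) ^ i / i.factorial with hg
  have hder : ∀ x : ℝ, HasDerivAt g
      ((n : ℝ) * (x - a) ^ (n - 1) * (∑ i ∈ Finset.range (n + 1), (l * (b - x)) ^ i / i.factorial)
        + (x - a) ^ n * (-l * ∑ i ∈ Finset.range n, (l * (b - x)) ^ i / i.factorial)) x := by
    intro x
    have h1 : HasDerivAt (fun x : ℝ => (x - a) ^ n) ((n : ℝ) * (x - a) ^ (n - 1)) x := by
      simpa using ((hasDerivAt_id x).sub_const a).fun_pow n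
    have h2 : HasDerivAt (fun x : ℝ => ∑ i ∈ Finset.range (n + 1), (l * (b - x)) ^ i / i.factorial)
        (∑ i ∈ Finset.range (n + 1), ((i : ℝ) * (l * (b - x)) ^ (i - 1) * (l * (0 - 1))) / i.factorial) x := by
      apply HasDerivAt.fun_sum
      intro i _
      have hb : HasDerivAt (fun x : ℝ => l * (b - x)) (l * (0 - 1)) x :=
        ((hasDerivAt_const x b).sub (hasDerivAt_id x)).const_mul l
      exact (hb.pow i).div_const _
    have hsum : (∑ i ∈ Finset.range (n + 1), ((i : ℝ) * (l * (b - x)) ^ (i - 1) * (l * (0 - 1))) / i.factorial)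
        = -l * ∑ i ∈ Finset.range n, (l * (b - x)) ^ i / i.factorial := by
      rw [Finset.sum_range_succ']
      simp only [Nat.cast_zero, zero_mul, Nat.factorial_zero, Nat.cast_one, zero_div, add_zero]
      rw [Finset.mul_sum]
      apply Finset.sum_congr rfl
      intro i _
      have hfac : ((i + 1).factorial : ℝ) = (i + 1) * i.factorial := by
        rw [Nat.factorial_succ]; push_cast; ring
      have hfpos : (0 : ℝ) < i.factorial := by positivity
      rw [hfac]
      push_cast
      field_simp
      ring
    rw [← hsum]
    exact h1.mul h2
  have hcont : ContinuousOn g (Set.Ioo a b) := by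
    apply Continuous.continuousOn
    apply Continuous.mul (by continuity)
    exact continuous_finset_sum _ fun i _ => (by continuity)
  apply StrictMonoOn.monotoneOn
  apply strictMonoOn_of_deriv_pos (convex_Ioo a b) hcont
  intro x hx
  rw [interior_Ioo] at hx
  obtain ⟨hxa, hxb⟩ := hx
  rw [(hder x).deriv]
  have hxa' : 0 < x - a := by linarith
  have hxb' : 0 < b - x := by linarith
  set Q : ℝ := ∑ i ∈ Finset.range n, (l * (b - x)) ^ i / i.factorial with hQ
  set P : ℝ := ∑ i ∈ Finset.range (n + 1), (l * (b - x)) ^ i / i.factorial with hP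
  have hQ1 : 1 ≤ Q := by
    have h0 : (1 : ℝ) = ∑ i ∈ Finset.range 1, (l * (b - x)) ^ i / i.factorial := by simp
    rw [h0, hQ]
    apply Finset.sum_le_sum_of_subset_of_nonneg
    · exact Finset.range_subset_range.mpr hn
    · intro i _ _; positivity
  have hPQ : Q ≤ P := by
    rw [hP, Finset.sum_range_succ, ← hQ]
    have : (0:ℝ) ≤ (l * (b - x)) ^ n / n.factorial := by positivity
    linarith
  have hpow : (x - a) ^ n = (x - a) ^ (n - 1) * (x - a) := by
    conv_lhs => rw [show n = (n - 1) + 1 from (Nat.succ_pred_eq_of_pos hn).symm]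
    rw [pow_succ]
  have hlx : l * (x - a) < n := by nlinarith
  have hpow' : (0:ℝ) < (x - a) ^ (n - 1) := by positivity
  have key : 0 < (n : ℝ) * P - l * (x - a) * Q := by nlinarith
  rw [hpow]
  nlinarith [mul_pos hpow' key]

theorem stmt_3 (l : ℝ) (hl : 0 < l) (α : ℕ) (hα : 2 ≤ α)
    (π : ℝ → ℝ)
    (hπ : ∀ x : ℝ, π x = l ^ α * x ^ (α - 1) * Real.exp (-l * x) / (α - 1).factorial)
    (S : ℝ → ℝ)
    (hS : ∀ x : ℝ, S x = Real.exp (-l * x) * ∑ i ∈ Finset.range α, (l * x) ^ i / i.factorial)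
    (a b : ℝ) (hab : a < b) (hrate : l < ((α : ℝ) - 1) / (b - a)) :
    MonotoneOn (fun ξ : ℝ => π (ξ - a) * S (b - ξ)) (Set.Ioo a b) := by
  set n : ℕ := α - 1 with hn
  have hn1 : 1 ≤ n := by omega
  have hαn : n + 1 = α := by omega
  have hcast : ((n : ℝ)) = (α : ℝ) - 1 := by
    rw [hn]; push_cast [Nat.cast_sub (by omega : 1 ≤ α)]; ring
  have hba : 0 < b - a := by linarith
  have hrate' : l * (b - a) < (n : ℝ) := by
    rw [hcast]
    calc l * (b - a) < ((α : ℝ) - 1) / (b - a) * (b - a) := by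
          exact mul_lt_mul_of_pos_right hrate hba
      _ = (α : ℝ) - 1 := by field_simp
  have hmono := aux_mono l hl n hn1 a b hab hrate'
  set K : ℝ := l ^ α * Real.exp (-l * (b - a)) / (α - 1).factorial with hK
  have hKpos : 0 ≤ K := by positivity
  have heq : (fun ξ : ℝ => π (ξ - a) * S (b - ξ)) = fun ξ : ℝ =>
      K * ((ξ - a) ^ n * ∑ i ∈ Finset.range (n + 1), (l * (b - ξ)) ^ i / i.factorial) := by
    funext ξ
    rw [hπ, hS, hK, hαn]
    have hE : Real.exp (-l * (ξ - a)) * Real.exp (-l * (b - ξ)) = Real.exp (-l * (b - a)) := by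
      rw [← Real.exp_add]; ring_nf
    rw [← hE, hn]
    ring
  rw [heq]
  intro x hx y hy hxy
  exact mul_le_mul_of_nonneg_left (hmono hx hy hxy) hKpos
end
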